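/- Let D_{2n} = ⟨a, b | aⁿ = b² = 1, b⁻¹ab = a⁻¹⟩ be the dihedral group of order 2n, and let X = {b, ab, a²b, ..., aⁿ⁻¹b}. Then X is a normal subset of D_{2n}, the Cayley sum graph CS(D_{2n}, X) is isomorphic to the complete bipartite graph K_{n,n}, and the subgroup ⟨b⟩ is a total perfect code of CS(D_{2n}, X). -/

import Mathlib

def caySum (G : Type*) [Group G] (X : Set G) : SimpleGraph G :=
  SimpleGraph.fromRel (fun g h => g * h ∈ X)

def IsNormalSet {G : Type*} [Group G] (X : Set G) : Prop :=
  ∀ g x : G, x ∈ X → g⁻¹ * x * g ∈ X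

def IsPerfectCode {V : Type*} (Γ : SimpleGraph V) (C : Set V) : Prop :=
  (∀ u ∈ C, ∀ v ∈ C, ¬ Γ.Adj u v) ∧ ∀ v ∉ C, ∃! u, u ∈ C ∧ Γ.Adj v u

def IsTotalPerfectCode {V : Type*} (Γ : SimpleGraph V) (C : Set V) : Prop :=
  ∀ v, ∃! u, u ∈ C ∧ Γ.Adj v u

def IsLeftTransversal {G : Type*} [Group G] (T : Set G) (H : Subgroup G) : Prop :=
  ∀ g : G, ∃! t, t ∈ T ∧ g⁻¹ * t ∈ H

open DihedralGroup

lemma inv_r {n : ℕ} (i : ZMod n) : (r i)⁻¹ = r (-i) := rfl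
lemma inv_sr {n : ℕ} (i : ZMod n) : (sr i)⁻¹ = sr i := rfl

lemma mem_closure_sr_zero {n : ℕ} (x : DihedralGroup n) :
    x ∈ Subgroup.closure ({sr 0} : Set (DihedralGroup n)) ↔ x = r 0 ∨ x = sr 0 := by
  constructor
  · rw [Subgroup.mem_closure_singleton]
    rintro ⟨k, rfl⟩
    have h2 : (sr (0 : ZMod n)) ^ (2 : ℤ) = 1 := by
      rw [zpow_two, sr_mul_self]
    rcases Int.even_or_odd k with ⟨m, rfl⟩ | ⟨m, rfl⟩
    · left
      rw [← two_mul, zpow_mul, h2, one_zpow, one_def]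
    · right
      rw [zpow_add, zpow_mul, h2, one_zpow, zpow_one, one_mul]
  · rintro (rfl | rfl)
    · rw [← one_def]; exact Subgroup.one_mem _
    · exact Subgroup.subset_closure rfl

theorem dihedral_completeBipartite {n : ℕ} (hn : 0 < n)
    (X : Set (DihedralGroup n)) (hX : X = {x | ∃ i, x = DihedralGroup.sr i}) :
    IsNormalSet X ∧
      Nonempty ((caySum (DihedralGroup n) X) ≃g
        (completeBipartiteGraph (ZMod n) (ZMod n))) ∧
      IsTotalPerfectCode (caySum (DihedralGroup n) X)
        ((Subgroup.closure {DihedralGroup.sr 0} : Subgroup (DihedralGroup n)) : Set _) := by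
  subst hX
  have hadj : ∀ g h : DihedralGroup n, (caySum (DihedralGroup n)
      {x | ∃ i, x = sr i}).Adj g h ↔
      ((∃ i j, g = r i ∧ h = sr j) ∨ (∃ i j, g = sr i ∧ h = r j)) := by
    intro g h
    simp only [caySum, SimpleGraph.fromRel_adj, Set.mem_setOf_eq]
    constructor
    · rintro ⟨hne, (⟨i, hi⟩ | ⟨i, hi⟩)⟩ <;>
        rcases g with a | a <;> rcases h with b | b <;>
        simp_all [r_mul_r, r_mul_sr, sr_mul_r, sr_mul_sr]
    · rintro (⟨i, j, rfl, rfl⟩ | ⟨i, j, rfl, rfl⟩)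
      · exact ⟨by simp, Or.inl ⟨_, by rw [r_mul_sr]⟩⟩
      · exact ⟨by simp, Or.inl ⟨_, by rw [sr_mul_r]⟩⟩
  refine ⟨?_, ⟨?_⟩, ?_⟩
  · rintro g x ⟨i, rfl⟩
    rcases g with j | j
    · exact ⟨_, by rw [_root_.inv_r, r_mul_sr, sr_mul_r]⟩
    · exact ⟨_, by rw [_root_.inv_sr, sr_mul_sr, r_mul_sr]⟩
  · refine ⟨⟨fun x => match x with | .r i => .inl i | .sr i => .inr i,
      fun x => match x with | .inl i => .r i | .inr i => .sr i,
      fun x => by cases x <;> rfl, fun x => by cases x <;> rfl⟩, ?_⟩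
    intro g h
    rw [hadj]
    rcases g with a | a <;> rcases h with b | b <;> simp
  · intro v
    rcases v with i | i
    · refine ⟨sr 0, ⟨(mem_closure_sr_zero _).2 (Or.inr rfl), (hadj _ _).2 (Or.inl ⟨i, 0, rfl, rfl⟩)⟩, ?_⟩
      rintro u ⟨hu, hadj'⟩
      rcases (mem_closure_sr_zero u).1 hu with rfl | rfl
      · rw [hadj] at hadj'
        rcases hadj' with ⟨_, _, h, _⟩ | ⟨_, _, h, _⟩ <;> simp_all [-r_zero]
      · rfl
    · refine ⟨r 0, ⟨(mem_closure_sr_zero _).2 (Or.inl rfl), (hadj _ _).2 (Or.inr ⟨i, 0, rfl, rfl⟩)⟩, ?_⟩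
      rintro u ⟨hu, hadj'⟩
      rcases (mem_closure_sr_zero u).1 hu with rfl | rfl
      · rfl
      · rw [hadj] at hadj'
        rcases hadj' with ⟨_, _, h, _⟩ | ⟨_, _, h, _⟩ <;> simp_all
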